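/- (Proposition 1, identifiability.) Let (Θ, Φ, S, α, β, U_α, V_α, U_β, V_β) and (Θ', Φ', S', α', β', U'_α, V'_α, U'_β, V'_β) be two parameter tuples of the same dimensions, each satisfying: α = U_α V_α^T, β = U_β V_β^T; Θ^T Θ = n·I_{k1}, Φ^T Φ = n·I_{k2}, 1_n^T Θ = 0, Θ^T U_β = 0, 1_n^T Φ = 0, Φ^T U_α = 0; (1/T)·M_m(S) M_m(S)^T is diagonal with strictly decreasing, strictly positive diagonal entries for m = 1, 2; and the matrices U_m V_m^T (for m = 1, 2, with U1 = (Θ, U_β, 1_n), V1 = ((I_T⊗Φ)M1(S)^T, (I_T⊗1_n)V_β, vec(α)), U2 = (Φ, U_α, 1_n), V2 = ((I_T⊗Θ)M2(S)^T, (I_T⊗1_n)V_α, vec(β))) have d_m = k_m + k_{(·)} + 1 strictly positive, pairwise distinct singular values (and analogously for the primed tuple). If the two tuples generate the same array, i.e. θ_i^T Λ_t φ_j + β_{it} + α_{jt} = θ'^T_i Λ'_t φ'_j + β'_{it} + α'_{jt} for all i, j ∈ [n], t ∈ [T], then there exist diagonal matrices R1 ∈ ℝ^{k1×k1} and R2 ∈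 ℝ^{k2×k2} with diagonal entries in {−1, +1} such that Θ' = Θ R1, Φ' = Φ R2, and Λ'_t = R1 Λ_t R2 for every t ∈ [T]. -/

import Mathlib

open Matrix Kronecker

/-- The matrix `I_T ⊗ 1_n ∈ ℝ^{(nT) × T}` (identity Kronecker all-ones column). -/
def idKronOnesCol (T n : ℕ) : Matrix (Fin T × Fin n) (Fin T) ℝ :=
  Matrix.reindex (Equiv.refl _) (Equiv.prodPUnit (Fin T))
    ((1 : Matrix (Fin T) (Fin T) ℝ) ⊗ₖ (Matrix.of fun (_ : Fin n) (_ : PUnit.{1}) => (1 : ℝ)))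

/-- Mode-1 unfolding `M1(S)` of the core array `S_{:,:,t} = Λ_t`. -/
def M1unf {T k1 k2 : ℕ} (Λ : Fin T → Matrix (Fin k1) (Fin k2) ℝ) :
    Matrix (Fin k1) (Fin T × Fin k2) ℝ :=
  Matrix.of fun a p => Λ p.1 a p.2

/-- Mode-2 unfolding `M2(S)` of the core array `S_{:,:,t} = Λ_t`. -/
def M2unf {T k1 k2 : ℕ} (Λ : Fin T → Matrix (Fin k1) (Fin k2) ℝ) :
    Matrix (Fin k2) (Fin T × Fin k1) ℝ :=
  Matrix.of fun b p => Λ p.1 p.2 b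

/-- `U1 = (Θ, U_β, 1_n)` (column concatenation). -/
def U1mat {n k1 kβ : ℕ} (Θ : Matrix (Fin n) (Fin k1) ℝ) (Uβ : Matrix (Fin n) (Fin kβ) ℝ) :
    Matrix (Fin n) ((Fin k1 ⊕ Fin kβ) ⊕ PUnit.{1}) ℝ :=
  Matrix.fromCols (Matrix.fromCols Θ Uβ) (Matrix.of fun _ _ => (1 : ℝ))

/-- `V1 = ((I_T ⊗ Φ) M1(S)ᵀ, (I_T ⊗ 1_n) V_β, vec(α))` (column concatenation). -/
def V1mat {n T k1 k2 kβ : ℕ} (Φ : Matrix (Fin n) (Fin k2) ℝ)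
    (Λ : Fin T → Matrix (Fin k1) (Fin k2) ℝ) (Vβ : Matrix (Fin T) (Fin kβ) ℝ)
    (α : Matrix (Fin n) (Fin T) ℝ) :
    Matrix (Fin T × Fin n) ((Fin k1 ⊕ Fin kβ) ⊕ PUnit.{1}) ℝ :=
  Matrix.fromCols
    (Matrix.fromCols (((1 : Matrix (Fin T) (Fin T) ℝ) ⊗ₖ Φ) * (M1unf Λ)ᵀ)
      (idKronOnesCol T n * Vβ))
    (Matrix.of fun p _ => α p.2 p.1)

/-- `U2 = (Φ, U_α, 1_n)` (column concatenation). -/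
def U2mat {n k2 kα : ℕ} (Φ : Matrix (Fin n) (Fin k2) ℝ) (Uα : Matrix (Fin n) (Fin kα) ℝ) :
    Matrix (Fin n) ((Fin k2 ⊕ Fin kα) ⊕ PUnit.{1}) ℝ :=
  Matrix.fromCols (Matrix.fromCols Φ Uα) (Matrix.of fun _ _ => (1 : ℝ))

/-- `V2 = ((I_T ⊗ Θ) M2(S)ᵀ, (I_T ⊗ 1_n) V_α, vec(β))` (column concatenation). -/
def V2mat {n T k1 k2 kα : ℕ} (Θ : Matrix (Fin n) (Fin k1) ℝ)
    (Λ : Fin T → Matrix (Fin k1) (Fin k2) ℝ) (Vα : Matrix (Fin T) (Fin kα) ℝ)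
    (β : Matrix (Fin n) (Fin T) ℝ) :
    Matrix (Fin T × Fin n) ((Fin k2 ⊕ Fin kα) ⊕ PUnit.{1}) ℝ :=
  Matrix.fromCols
    (Matrix.fromCols (((1 : Matrix (Fin T) (Fin T) ℝ) ⊗ₖ Θ) * (M2unf Λ)ᵀ)
      (idKronOnesCol T n * Vα))
    (Matrix.of fun p _ => β p.2 p.1)

/-- The identifiability conditions (Assumption 1) for a parameter tuple of the
multilayer latent space model. -/
def Admissible {n T k1 k2 kα kβ : ℕ}
    (Θ : Matrix (Fin n) (Fin k1) ℝ) (Φ : Matrix (Fin n) (Fin k2) ℝ)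
    (Λ : Fin T → Matrix (Fin k1) (Fin k2) ℝ)
    (α β : Matrix (Fin n) (Fin T) ℝ)
    (Uα : Matrix (Fin n) (Fin kα) ℝ) (Vα : Matrix (Fin T) (Fin kα) ℝ)
    (Uβ : Matrix (Fin n) (Fin kβ) ℝ) (Vβ : Matrix (Fin T) (Fin kβ) ℝ) : Prop :=
  -- factorizations of the degree matrices
  α = Uα * Vαᵀ ∧ β = Uβ * Vβᵀ ∧
  -- condition 1: scaling, centering, orthogonality
  Θᵀ * Θ = (n : ℝ) • (1 : Matrix (Fin k1) (Fin k1) ℝ) ∧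
  Φᵀ * Φ = (n : ℝ) • (1 : Matrix (Fin k2) (Fin k2) ℝ) ∧
  (∀ a, ∑ i, Θ i a = 0) ∧ Θᵀ * Uβ = 0 ∧
  (∀ b, ∑ j, Φ j b = 0) ∧ Φᵀ * Uα = 0 ∧
  -- condition 2: `(1/T)·M_m(S) M_m(S)ᵀ` diagonal, strictly decreasing, positive
  (∃ d : Fin k1 → ℝ, (T : ℝ)⁻¹ • (M1unf Λ * (M1unf Λ)ᵀ) = Matrix.diagonal d ∧
    StrictAnti d ∧ ∀ i, 0 < d i) ∧
  (∃ d : Fin k2 → ℝ, (T : ℝ)⁻¹ • (M2unf Λ * (M2unf Λ)ᵀ) = Matrix.diagonal d ∧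
    StrictAnti d ∧ ∀ i, 0 < d i) ∧
  -- condition 3: `U_m V_mᵀ` has `d_m` strictly positive, pairwise distinct singular
  -- values, witnessed by a scaled singular value decomposition
  (∃ (U : Matrix (Fin n) (Fin (k1 + kβ + 1)) ℝ)
      (V : Matrix (Fin T × Fin n) (Fin (k1 + kβ + 1)) ℝ) (e : Fin (k1 + kβ + 1) → ℝ),
    U1mat Θ Uβ * (V1mat Φ Λ Vβ α)ᵀ = U * Vᵀ ∧
    Uᵀ * U = (n : ℝ) • (1 : Matrix (Fin (k1 + kβ + 1)) (Fin (k1 + kβ + 1)) ℝ) ∧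
    Vᵀ * V = Matrix.diagonal e ∧ StrictAnti e ∧ ∀ i, 0 < e i) ∧
  (∃ (U : Matrix (Fin n) (Fin (k2 + kα + 1)) ℝ)
      (V : Matrix (Fin T × Fin n) (Fin (k2 + kα + 1)) ℝ) (e : Fin (k2 + kα + 1) → ℝ),
    U2mat Φ Uα * (V2mat Θ Λ Vα β)ᵀ = U * Vᵀ ∧
    Uᵀ * U = (n : ℝ) • (1 : Matrix (Fin (k2 + kα + 1)) (Fin (k2 + kα + 1)) ℝ) ∧
    Vᵀ * V = Matrix.diagonal e ∧ StrictAnti e ∧ ∀ i, 0 < e i)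

namespace IdentAux
open Matrix Finset

noncomputable def sq {m k : Type*} [Fintype m] [Fintype k] (A : Matrix m k ℝ) : ℝ :=
  Matrix.trace (Aᵀ * A)

lemma sq_eq_sum {m k : Type*} [Fintype m] [Fintype k] (A : Matrix m k ℝ) :
    sq A = ∑ j, ∑ i, (A i j)^2 := by
  simp [sq, Matrix.trace, Matrix.diag, Matrix.mul_apply, pow_two]

lemma sq_nonneg {m k : Type*} [Fintype m] [Fintype k] (A : Matrix m k ℝ) : 0 ≤ sq A := by
  rw [sq_eq_sum]
  exact Finset.sum_nonneg fun j _ => Finset.sum_nonneg fun i _ => by positivity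

lemma sq_eq_zero {m k : Type*} [Fintype m] [Fintype k] {A : Matrix m k ℝ}
    (h : sq A = 0) : A = 0 := by
  rw [sq_eq_sum] at h
  ext i j
  have h1 : ∀ j' ∈ (univ : Finset k), (0:ℝ) ≤ ∑ i, (A i j')^2 :=
    fun j' _ => Finset.sum_nonneg fun i _ => by positivity
  have h2 := (Finset.sum_eq_zero_iff_of_nonneg h1).mp h j (mem_univ j)
  have h3 := (Finset.sum_eq_zero_iff_of_nonneg
    (fun i' (_ : i' ∈ (univ : Finset m)) => by positivity)).mp h2 i (mem_univ i)
  simpa using pow_eq_zero_iff (n := 2) (by norm_num) |>.mp h3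

lemma sq_zero_of_trace {m k : Type*} [Fintype m] [Fintype k] {A : Matrix m k ℝ}
    (h : Aᵀ * A = 0) : A = 0 := sq_eq_zero (by simp [sq, h])

lemma contract {n k k' : ℕ} (hn : (n:ℝ) ≠ 0)
    (A : Matrix (Fin n) (Fin k) ℝ) (A' : Matrix (Fin n) (Fin k') ℝ)
    (hA : Aᵀ * A = (n:ℝ) • (1 : Matrix (Fin k) (Fin k) ℝ))
    (hA' : A'ᵀ * A' = (n:ℝ) • (1 : Matrix (Fin k') (Fin k') ℝ)) :
    (n:ℝ)⁻¹ • ((A - (n:ℝ)⁻¹ • (A' * A'ᵀ * A))ᵀ * (A - (n:ℝ)⁻¹ • (A' * A'ᵀ * A)))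
      = 1 - ((n:ℝ)⁻¹ • (Aᵀ * A')) * ((n:ℝ)⁻¹ • (Aᵀ * A'))ᵀ := by
  have hq : ∀ {p : ℕ} (X : Matrix (Fin k') (Fin p) ℝ), A'ᵀ * (A' * X) = (n:ℝ) • X := by
    intro p X; rw [← Matrix.mul_assoc, hA', Matrix.smul_mul, Matrix.one_mul]
  simp only [Matrix.transpose_sub, Matrix.transpose_smul, Matrix.transpose_mul,
    Matrix.transpose_transpose, Matrix.sub_mul, Matrix.mul_sub, Matrix.smul_mul,
    Matrix.mul_smul, Matrix.mul_assoc, smul_smul, smul_sub, hA, hq]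
  match_scalars <;> field_simp <;> ring

/-- The key exact trace decomposition. -/
lemma star_id {n k1 k2 : ℕ} (hn : (n:ℝ) ≠ 0)
    (Θ Θ' : Matrix (Fin n) (Fin k1) ℝ) (Φ Φ' : Matrix (Fin n) (Fin k2) ℝ)
    (hΘ : Θᵀ * Θ = (n:ℝ) • (1 : Matrix (Fin k1) (Fin k1) ℝ))
    (hΘ' : Θ'ᵀ * Θ' = (n:ℝ) • (1 : Matrix (Fin k1) (Fin k1) ℝ))
    (hΦ : Φᵀ * Φ = (n:ℝ) • (1 : Matrix (Fin k2) (Fin k2) ℝ))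
    (hΦ' : Φ'ᵀ * Φ' = (n:ℝ) • (1 : Matrix (Fin k2) (Fin k2) ℝ))
    (L L' : Matrix (Fin k1) (Fin k2) ℝ)
    (hrel : L' = ((n:ℝ)⁻¹ • (Θᵀ * Θ'))ᵀ * L * ((n:ℝ)⁻¹ • (Φᵀ * Φ'))) :
    Matrix.trace (L'ᵀ * L')
      + (n:ℝ)⁻¹ * sq ((Θ - (n:ℝ)⁻¹ • (Θ' * Θ'ᵀ * Θ)) * (L * ((n:ℝ)⁻¹ • (Φᵀ * Φ'))))
      + (n:ℝ)⁻¹ * sq ((Φ - (n:ℝ)⁻¹ • (Φ' * Φ'ᵀ * Φ)) * Lᵀ)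
      = Matrix.trace (Lᵀ * L) := by
  set P : Matrix (Fin k1) (Fin k1) ℝ := (n:ℝ)⁻¹ • (Θᵀ * Θ') with hP
  set Q : Matrix (Fin k2) (Fin k2) ℝ := (n:ℝ)⁻¹ • (Φᵀ * Φ') with hQ
  set H : Matrix (Fin n) (Fin k1) ℝ := Θ - (n:ℝ)⁻¹ • (Θ' * Θ'ᵀ * Θ) with hH
  set G : Matrix (Fin n) (Fin k2) ℝ := Φ - (n:ℝ)⁻¹ • (Φ' * Φ'ᵀ * Φ) with hG
  set B : Matrix (Fin k1) (Fin k2) ℝ := L * Q with hB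
  have hHc : (n:ℝ)⁻¹ • (Hᵀ * H) = 1 - P * Pᵀ := contract hn Θ Θ' hΘ hΘ'
  have hGc : (n:ℝ)⁻¹ • (Gᵀ * G) = 1 - Q * Qᵀ := contract hn Φ Φ' hΦ hΦ'
  have hL' : L' = Pᵀ * B := by rw [hrel, Matrix.mul_assoc]
  have t1 : Matrix.trace (L'ᵀ * L') = Matrix.trace (Bᵀ * ((P * Pᵀ) * B)) := by
    rw [hL', Matrix.transpose_mul, Matrix.transpose_transpose]
    simp only [Matrix.mul_assoc]
  have t2 : (n:ℝ)⁻¹ * sq (H * B) = Matrix.trace (Bᵀ * ((1 - P * Pᵀ) * B)) := by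
    rw [← hHc, sq, Matrix.transpose_mul]
    rw [show Bᵀ * Hᵀ * (H * B) = Bᵀ * ((Hᵀ * H) * B) by simp only [Matrix.mul_assoc]]
    rw [show Bᵀ * ((n:ℝ)⁻¹ • (Hᵀ * H) * B) = (n:ℝ)⁻¹ • (Bᵀ * (Hᵀ * H * B)) by
      rw [Matrix.smul_mul, Matrix.mul_smul, Matrix.mul_assoc]]
    rw [Matrix.trace_smul]
    simp
  have t12 : Matrix.trace (L'ᵀ * L') + (n:ℝ)⁻¹ * sq (H * B) = Matrix.trace (Bᵀ * B) := by
    rw [t1, t2, ← Matrix.trace_add, ← Matrix.mul_add, ← Matrix.add_mul]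
    simp
  have t3 : Matrix.trace (Bᵀ * B) = Matrix.trace ((Lᵀ * L) * (Q * Qᵀ)) := by
    rw [hB, Matrix.transpose_mul]
    rw [show Qᵀ * Lᵀ * (L * Q) = Qᵀ * (Lᵀ * L * Q) by simp only [Matrix.mul_assoc]]
    rw [Matrix.trace_mul_comm, Matrix.mul_assoc]
  have t4 : (n:ℝ)⁻¹ * sq (G * Lᵀ) = Matrix.trace ((Lᵀ * L) * (1 - Q * Qᵀ)) := by
    rw [← hGc, sq, Matrix.transpose_mul, Matrix.transpose_transpose]
    rw [show L * Gᵀ * (G * Lᵀ) = L * (Gᵀ * G * Lᵀ) by simp only [Matrix.mul_assoc]]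
    rw [Matrix.trace_mul_comm, show Gᵀ * G * Lᵀ * L = Gᵀ * G * (Lᵀ * L) by
      simp only [Matrix.mul_assoc]]
    rw [Matrix.trace_mul_comm, Matrix.mul_smul, Matrix.trace_smul]
    simp
  have t34 : Matrix.trace (Bᵀ * B) + (n:ℝ)⁻¹ * sq (G * Lᵀ) = Matrix.trace (Lᵀ * L) := by
    rw [t3, t4, ← Matrix.trace_add, ← Matrix.mul_add]
    simp
  calc Matrix.trace (L'ᵀ * L') + (n:ℝ)⁻¹ * sq (H * B) + (n:ℝ)⁻¹ * sq (G * Lᵀ)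
      = Matrix.trace (Bᵀ * B) + (n:ℝ)⁻¹ * sq (G * Lᵀ) := by rw [t12]
    _ = Matrix.trace (Lᵀ * L) := t34

lemma entry_eq {n k1 k2 : ℕ} (Θ : Matrix (Fin n) (Fin k1) ℝ) (Φ : Matrix (Fin n) (Fin k2) ℝ)
    (Λt : Matrix (Fin k1) (Fin k2) ℝ) (i j : Fin n) :
    (Θ * Λt * Φᵀ) i j = Θ i ⬝ᵥ (Λt *ᵥ Φ j) := by
  simp only [Matrix.mul_apply, Matrix.transpose_apply, Matrix.mulVec, dotProduct,
    Finset.sum_mul, Finset.mul_sum]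
  rw [Finset.sum_comm]
  exact Finset.sum_congr rfl fun a _ => Finset.sum_congr rfl fun b _ => by ring

lemma sandwich {n k1 k2 c1 c2 : ℕ}
    (Θ : Matrix (Fin n) (Fin k1) ℝ) (Φ : Matrix (Fin n) (Fin k2) ℝ)
    (Λt : Matrix (Fin k1) (Fin k2) ℝ) (βt αt : Fin n → ℝ)
    (Θ1 : Matrix (Fin n) (Fin c1) ℝ) (Φ2 : Matrix (Fin n) (Fin c2) ℝ)
    (hΘ1 : ∀ a, ∑ i, Θ1 i a = 0) (hΦ2 : ∀ b, ∑ j, Φ2 j b = 0) (a : Fin c1) (b : Fin c2) :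
    ∑ i, ∑ j, Θ1 i a * ((Θ i ⬝ᵥ (Λt *ᵥ Φ j)) + βt i + αt j) * Φ2 j b
      = (Θ1ᵀ * (Θ * Λt * Φᵀ) * Φ2) a b := by
  have expand : ∀ i j, Θ1 i a * ((Θ i ⬝ᵥ (Λt *ᵥ Φ j)) + βt i + αt j) * Φ2 j b
      = Θ1 i a * (Θ * Λt * Φᵀ) i j * Φ2 j b
        + (Θ1 i a * βt i) * Φ2 j b + Θ1 i a * (αt j * Φ2 j b) := by
    intro i j; rw [entry_eq]; ring
  simp only [expand, Finset.sum_add_distrib]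
  have e2 : ∑ i, ∑ j, (Θ1 i a * βt i) * Φ2 j b = 0 := by
    apply Finset.sum_eq_zero; intro i _
    rw [← Finset.mul_sum, hΦ2, mul_zero]
  have e3 : ∑ i, ∑ j, Θ1 i a * (αt j * Φ2 j b) = 0 := by
    rw [← Finset.sum_mul_sum]
    rw [hΘ1, zero_mul]
  rw [e2, e3, add_zero, add_zero]
  simp only [Matrix.mul_apply, Matrix.transpose_apply, Finset.sum_mul]
  exact Finset.sum_comm

lemma diag_sign {k : ℕ} (P : Matrix (Fin k) (Fin k) ℝ) (d d' : Fin k → ℝ)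
    (hPo : Pᵀ * P = 1) (hd : StrictAnti d) (hd' : StrictAnti d')
    (hrel : Matrix.diagonal d' = Pᵀ * Matrix.diagonal d * P) :
    ∃ r : Fin k → ℝ, (∀ i, r i = 1 ∨ r i = -1) ∧ P = Matrix.diagonal r := by
  have hPo' : P * Pᵀ = 1 := mul_eq_one_comm.mp hPo
  have hcomm : P * Matrix.diagonal d' = Matrix.diagonal d * P := by
    rw [hrel, ← Matrix.mul_assoc, ← Matrix.mul_assoc, hPo', Matrix.one_mul]
  have h1 : ∀ a b, P a b * d' b = d a * P a b := by
    intro a b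
    have := congrFun (congrFun hcomm a) b
    rwa [Matrix.mul_diagonal, Matrix.diagonal_mul] at this
  have key : ∀ a b, P a b ≠ 0 → d' b = d a := by
    intro a b hab
    have := h1 a b
    rw [mul_comm (d a) (P a b)] at this
    exact mul_left_cancel₀ hab this
  have hcol : ∀ b, ∃ a, P a b ≠ 0 := by
    intro b
    by_contra hc
    push_neg at hc
    have : (Pᵀ * P) b b = 0 := by
      rw [Matrix.mul_apply]
      exact Finset.sum_eq_zero fun a _ => by simp [hc a]
    rw [hPo] at this
    simp at this
  have uniq_a : ∀ a a' b, P a b ≠ 0 → P a' b ≠ 0 → a = a' := by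
    intro a a' b ha ha'
    exact hd.injective ((key a b ha).symm.trans (key a' b ha'))
  choose f hf using hcol
  have hfu : ∀ a b, P a b ≠ 0 → a = f b := fun a b ha => uniq_a a (f b) b ha (hf b)
  have hinj : Function.Injective f := by
    intro b b' hbb
    apply hd'.injective
    rw [key (f b) b (hf b), hbb, key (f b') b' (hf b')]
  have hmono : StrictMono f := by
    intro b b' hlt
    have : d (f b') < d (f b) := by
      rw [← key (f b) b (hf b), ← key (f b') b' (hf b')]
      exact hd' hlt
    exact hd.lt_iff_gt.mp this
  have hfid : f = id := by
    have : WellFoundedLT (Fin k) := inferInstance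
    have hsurj : Function.Surjective f := Finite.surjective_of_injective hinj
    have hr : Set.range f = Set.range (id : Fin k → Fin k) := by
      rw [Set.range_eq_univ.mpr hsurj, Set.range_id]
    exact (hmono.range_inj strictMono_id).mp hr
  have hoff : ∀ a b, a ≠ b → P a b = 0 := by
    intro a b hne
    by_contra hab
    exact hne ((hfu a b hab).trans (congrFun hfid b))
  refine ⟨fun a => P a a, fun a => ?_, ?_⟩
  · have : (Pᵀ * P) a a = 1 := by rw [hPo]; simp
    rw [Matrix.mul_apply] at this
    rw [Finset.sum_eq_single a (fun c _ hca => by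
      rw [Matrix.transpose_apply, hoff c a hca, zero_mul]) (by simp)] at this
    rw [Matrix.transpose_apply] at this
    exact mul_self_eq_one_iff.mp this
  · ext a b
    by_cases hab : a = b
    · subst hab; simp
    · rw [hoff a b hab, Matrix.diagonal_apply_ne _ hab]

/-- If `A, A'` have orthogonal columns of norm `√n` and `P := n⁻¹ AᵀA'` is orthogonal,
then `A' = A P`. -/
lemma factor_eq {n k : ℕ} (hn : (n:ℝ) ≠ 0) (A A' : Matrix (Fin n) (Fin k) ℝ)
    (hA : Aᵀ * A = (n:ℝ) • (1 : Matrix (Fin k) (Fin k) ℝ))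
    (hA' : A'ᵀ * A' = (n:ℝ) • (1 : Matrix (Fin k) (Fin k) ℝ))
    (hPo : ((n:ℝ)⁻¹ • (Aᵀ * A'))ᵀ * ((n:ℝ)⁻¹ • (Aᵀ * A')) = 1) :
    A' = A * ((n:ℝ)⁻¹ • (Aᵀ * A')) := by
  set P : Matrix (Fin k) (Fin k) ℝ := (n:ℝ)⁻¹ • (Aᵀ * A') with hPdef
  have hnP : Aᵀ * A' = (n:ℝ) • P := by
    rw [hPdef, smul_smul, mul_inv_cancel₀ hn, one_smul]
  have hnPt : A'ᵀ * A = (n:ℝ) • Pᵀ := by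
    have := congrArg Matrix.transpose hnP
    rwa [Matrix.transpose_mul, Matrix.transpose_smul] at this
  have hW : (A' - A * P)ᵀ * (A' - A * P) = 0 := by
    have hBterm : A'ᵀ * (A * P) = (n:ℝ) • (1 : Matrix (Fin k) (Fin k) ℝ) := by
      rw [← Matrix.mul_assoc, hnPt, Matrix.smul_mul, hPo]
    have hCterm : (A * P)ᵀ * A' = (n:ℝ) • (1 : Matrix (Fin k) (Fin k) ℝ) := by
      rw [Matrix.transpose_mul, Matrix.mul_assoc, hnP, Matrix.mul_smul, hPo]
    have hDterm : (A * P)ᵀ * (A * P) = (n:ℝ) • (1 : Matrix (Fin k) (Fin k) ℝ) := by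
      rw [Matrix.transpose_mul, show Pᵀ * Aᵀ * (A * P) = Pᵀ * ((Aᵀ * A) * P) by
        simp only [Matrix.mul_assoc], hA, Matrix.smul_mul, Matrix.one_mul,
        Matrix.mul_smul, hPo]
    rw [Matrix.transpose_sub, Matrix.sub_mul, Matrix.mul_sub, Matrix.mul_sub,
      hA', hBterm, hCterm, hDterm]
    abel
  have := sq_zero_of_trace hW
  rwa [sub_eq_zero] at this

end IdentAux

/-- Proposition 1: two admissible parameter tuples generating the same
array agree up to diagonal ±1 sign matrices: `Θ' = Θ R1`, `Φ' = Φ R2`,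
`Λ'_t = R1 Λ_t R2`. -/
theorem identifiability {n T k1 k2 kα kβ : ℕ}
    (Θ Θ' : Matrix (Fin n) (Fin k1) ℝ) (Φ Φ' : Matrix (Fin n) (Fin k2) ℝ)
    (Λ Λ' : Fin T → Matrix (Fin k1) (Fin k2) ℝ)
    (α β α' β' : Matrix (Fin n) (Fin T) ℝ)
    (Uα Uα' : Matrix (Fin n) (Fin kα) ℝ) (Vα Vα' : Matrix (Fin T) (Fin kα) ℝ)
    (Uβ Uβ' : Matrix (Fin n) (Fin kβ) ℝ) (Vβ Vβ' : Matrix (Fin T) (Fin kβ) ℝ)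
    (h : Admissible Θ Φ Λ α β Uα Vα Uβ Vβ)
    (h' : Admissible Θ' Φ' Λ' α' β' Uα' Vα' Uβ' Vβ')
    (hsame : ∀ (i j : Fin n) (t : Fin T),
      Θ i ⬝ᵥ (Λ t *ᵥ Φ j) + β i t + α j t = Θ' i ⬝ᵥ (Λ' t *ᵥ Φ' j) + β' i t + α' j t) :
    ∃ (r1 : Fin k1 → ℝ) (r2 : Fin k2 → ℝ),
      (∀ i, r1 i = 1 ∨ r1 i = -1) ∧ (∀ j, r2 j = 1 ∨ r2 j = -1) ∧
      Θ' = Θ * Matrix.diagonal r1 ∧ Φ' = Φ * Matrix.diagonal r2 ∧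
      ∀ t, Λ' t = Matrix.diagonal r1 * Λ t * Matrix.diagonal r2 := by
  classical
  obtain ⟨hα, hβ, hΘo, hΦo, hΘc, hΘUβ, hΦc, hΦUα, ⟨d1, hd1, hd1a, hd1p⟩,
    ⟨d2, hd2, hd2a, hd2p⟩, hA3, hA4⟩ := h
  obtain ⟨hα', hβ', hΘo', hΦo', hΘc', hΘUβ', hΦc', hΦUα', ⟨d1', hd1', hd1a', hd1p'⟩,
    ⟨d2', hd2', hd2a', hd2p'⟩, hA3', hA4'⟩ := h'
  by_cases hk1 : k1 = 0
  · subst hk1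
    have hk2 : k2 = 0 := by
      by_contra hk2
      have b0 : Fin k2 := ⟨0, Nat.pos_of_ne_zero hk2⟩
      have hz : (M2unf Λ * (M2unf Λ)ᵀ) b0 b0 = 0 := by
        rw [Matrix.mul_apply]
        exact Finset.sum_eq_zero fun p _ => p.2.elim0
      have hcf := congrFun (congrFun hd2 b0) b0
      rw [Matrix.smul_apply, hz, smul_zero, Matrix.diagonal_apply_eq] at hcf
      exact absurd hcf.symm (ne_of_gt (hd2p b0))
    subst hk2
    exact ⟨fun _ => 1, fun _ => 1, fun i => Or.inl rfl, fun j => Or.inl rfl,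
      by ext i b; exact b.elim0, by ext i b; exact b.elim0,
      fun t => by ext a b; exact a.elim0⟩
  by_cases hk2 : k2 = 0
  · exfalso
    subst hk2
    have a0 : Fin k1 := ⟨0, Nat.pos_of_ne_zero hk1⟩
    have hz : (M1unf Λ * (M1unf Λ)ᵀ) a0 a0 = 0 := by
      rw [Matrix.mul_apply]
      exact Finset.sum_eq_zero fun p _ => p.2.elim0
    have hcf := congrFun (congrFun hd1 a0) a0
    rw [Matrix.smul_apply, hz, smul_zero, Matrix.diagonal_apply_eq] at hcf
    exact absurd hcf.symm (ne_of_gt (hd1p a0))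
  have hn0 : n ≠ 0 := by
    intro hn
    subst hn
    obtain ⟨U, V, e, _, _, hVo, _, hep⟩ := hA3
    have i0 : Fin (k1 + kβ + 1) := ⟨0, by omega⟩
    have hz : (Vᵀ * V) i0 i0 = 0 := by
      rw [Matrix.mul_apply]
      exact Finset.sum_eq_zero fun p _ => p.2.elim0
    rw [hVo, Matrix.diagonal_apply_eq] at hz
    exact absurd hz (ne_of_gt (hep i0))
  have hn : (n:ℝ) ≠ 0 := Nat.cast_ne_zero.mpr hn0
  have hnpos : (0:ℝ) < (n:ℝ)⁻¹ := by
    have h1 : (0:ℝ) < (n:ℝ) := by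
      have := Nat.pos_of_ne_zero hn0
      exact_mod_cast this
    exact inv_pos.mpr h1
  have hT0 : T ≠ 0 := by
    intro hT
    subst hT
    have a0 : Fin k1 := ⟨0, Nat.pos_of_ne_zero hk1⟩
    have hcf := congrFun (congrFun hd1 a0) a0
    rw [Matrix.smul_apply, Matrix.diagonal_apply_eq] at hcf
    norm_num at hcf
    exact absurd hcf.symm (ne_of_gt (hd1p a0))
  have hT : (T:ℝ) ≠ 0 := Nat.cast_ne_zero.mpr hT0
  -- gram sums: mode 1 and mode 2 unfoldings
  have hMsum1 : ∀ (A : Fin T → Matrix (Fin k1) (Fin k2) ℝ),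
      M1unf A * (M1unf A)ᵀ = ∑ t, A t * (A t)ᵀ := by
    intro A
    ext a a'
    rw [Matrix.mul_apply, Fintype.sum_prod_type]
    simp [M1unf, Matrix.sum_apply, Matrix.mul_apply]
  have hMsum2 : ∀ (A : Fin T → Matrix (Fin k1) (Fin k2) ℝ),
      M2unf A * (M2unf A)ᵀ = ∑ t, (A t)ᵀ * A t := by
    intro A
    ext b b'
    rw [Matrix.mul_apply, Fintype.sum_prod_type]
    simp [M2unf, Matrix.sum_apply, Matrix.mul_apply]
  have hsum1 : ∑ t, Λ t * (Λ t)ᵀ = (T:ℝ) • Matrix.diagonal d1 := by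
    rw [← hd1, ← hMsum1 Λ, smul_smul, mul_inv_cancel₀ hT, one_smul]
  have hsum2 : ∑ t, (Λ t)ᵀ * Λ t = (T:ℝ) • Matrix.diagonal d2 := by
    rw [← hd2, ← hMsum2 Λ, smul_smul, mul_inv_cancel₀ hT, one_smul]
  have hsum1' : ∑ t, Λ' t * (Λ' t)ᵀ = (T:ℝ) • Matrix.diagonal d1' := by
    rw [← hd1', ← hMsum1 Λ', smul_smul, mul_inv_cancel₀ hT, one_smul]
  have hsum2' : ∑ t, (Λ' t)ᵀ * Λ' t = (T:ℝ) • Matrix.diagonal d2' := by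
    rw [← hd2', ← hMsum2 Λ', smul_smul, mul_inv_cancel₀ hT, one_smul]
  -- matrix equations obtained by sandwiching the common data array
  have hXeq : ∀ {c1 c2 : ℕ} (Θ1 : Matrix (Fin n) (Fin c1) ℝ) (Φ2 : Matrix (Fin n) (Fin c2) ℝ),
      (∀ a, ∑ i, Θ1 i a = 0) → (∀ b, ∑ j, Φ2 j b = 0) → ∀ t,
      Θ1ᵀ * (Θ * Λ t * Φᵀ) * Φ2 = Θ1ᵀ * (Θ' * Λ' t * Φ'ᵀ) * Φ2 := by
    intro c1 c2 Θ1 Φ2 h1 h2 t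
    ext a b
    rw [← IdentAux.sandwich Θ Φ (Λ t) (fun i => β i t) (fun j => α j t) Θ1 Φ2 h1 h2 a b,
        ← IdentAux.sandwich Θ' Φ' (Λ' t) (fun i => β' i t) (fun j => α' j t) Θ1 Φ2 h1 h2 a b]
    exact Finset.sum_congr rfl fun i _ => Finset.sum_congr rfl fun j _ => by
      rw [hsame i j t]
  -- the two fundamental relations
  have key3 : ∀ t, Λ' t = ((n:ℝ)⁻¹ • (Θᵀ * Θ'))ᵀ * Λ t * ((n:ℝ)⁻¹ • (Φᵀ * Φ')) := by
    intro t
    have hx := hXeq Θ' Φ' hΘc' hΦc' t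
    have hr : Θ'ᵀ * (Θ' * Λ' t * Φ'ᵀ) * Φ' = ((n:ℝ) * (n:ℝ)) • Λ' t := by
      calc Θ'ᵀ * (Θ' * Λ' t * Φ'ᵀ) * Φ' = Θ'ᵀ * Θ' * Λ' t * (Φ'ᵀ * Φ') := by
            simp only [Matrix.mul_assoc]
        _ = ((n:ℝ) * (n:ℝ)) • Λ' t := by
            rw [hΘo', hΦo', Matrix.smul_mul, Matrix.mul_smul, Matrix.one_mul,
              Matrix.mul_one, smul_smul]
    have hl : Θ'ᵀ * (Θ * Λ t * Φᵀ) * Φ' = Θ'ᵀ * Θ * Λ t * (Φᵀ * Φ') := by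
      simp only [Matrix.mul_assoc]
    rw [hl, hr] at hx
    rw [Matrix.transpose_smul, Matrix.transpose_mul, Matrix.transpose_transpose,
      Matrix.smul_mul, Matrix.smul_mul, Matrix.mul_smul, hx, smul_smul, smul_smul]
    rw [show (n:ℝ)⁻¹ * (n:ℝ)⁻¹ * ((n:ℝ) * (n:ℝ)) = 1 by field_simp, one_smul]
  have key4 : ∀ t, Λ t = ((n:ℝ)⁻¹ • (Θ'ᵀ * Θ))ᵀ * Λ' t * ((n:ℝ)⁻¹ • (Φ'ᵀ * Φ)) := by
    intro t
    have hx := hXeq Θ Φ hΘc hΦc t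
    have hr : Θᵀ * (Θ * Λ t * Φᵀ) * Φ = ((n:ℝ) * (n:ℝ)) • Λ t := by
      calc Θᵀ * (Θ * Λ t * Φᵀ) * Φ = Θᵀ * Θ * Λ t * (Φᵀ * Φ) := by
            simp only [Matrix.mul_assoc]
        _ = ((n:ℝ) * (n:ℝ)) • Λ t := by
            rw [hΘo, hΦo, Matrix.smul_mul, Matrix.mul_smul, Matrix.one_mul,
              Matrix.mul_one, smul_smul]
    have hl : Θᵀ * (Θ' * Λ' t * Φ'ᵀ) * Φ = Θᵀ * Θ' * Λ' t * (Φ'ᵀ * Φ) := by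
      simp only [Matrix.mul_assoc]
    rw [hr, hl] at hx
    rw [Matrix.transpose_smul, Matrix.transpose_mul, Matrix.transpose_transpose,
      Matrix.smul_mul, Matrix.smul_mul, Matrix.mul_smul, ← hx, smul_smul, smul_smul]
    rw [show (n:ℝ)⁻¹ * (n:ℝ)⁻¹ * ((n:ℝ) * (n:ℝ)) = 1 by field_simp, one_smul]
  -- the exact trace decompositions
  have hstar := fun t => IdentAux.star_id hn Θ Θ' Φ Φ' hΘo hΘo' hΦo hΦo' (Λ t) (Λ' t) (key3 t)
  have hstar' := fun t => IdentAux.star_id hn Θ' Θ Φ' Φ hΘo' hΘo hΦo' hΦo (Λ' t) (Λ t) (key4 t)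
  set P : Matrix (Fin k1) (Fin k1) ℝ := (n:ℝ)⁻¹ • (Θᵀ * Θ') with hPdef
  set Q : Matrix (Fin k2) (Fin k2) ℝ := (n:ℝ)⁻¹ • (Φᵀ * Φ') with hQdef
  set H : Matrix (Fin n) (Fin k1) ℝ := Θ - (n:ℝ)⁻¹ • (Θ' * Θ'ᵀ * Θ) with hHdef
  set G : Matrix (Fin n) (Fin k2) ℝ := Φ - (n:ℝ)⁻¹ • (Φ' * Φ'ᵀ * Φ) with hGdef
  have hGc := IdentAux.contract hn Φ Φ' hΦo hΦo'
  have hHc := IdentAux.contract hn Θ Θ' hΘo hΘo'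
  rw [← hQdef, ← hGdef] at hGc
  rw [← hPdef, ← hHdef] at hHc
  have hfacP := IdentAux.factor_eq hn Θ Θ' hΘo hΘo'
  have hfacQ := IdentAux.factor_eq hn Φ Φ' hΦo hΦo'
  rw [← hPdef] at hfacP
  rw [← hQdef] at hfacQ
  clear_value P Q H G
  -- sum the decompositions over t
  have e1 : (∑ t, Matrix.trace ((Λ' t)ᵀ * Λ' t))
      + (∑ t, (n:ℝ)⁻¹ * IdentAux.sq (H * (Λ t * Q)))
      + (∑ t, (n:ℝ)⁻¹ * IdentAux.sq (G * (Λ t)ᵀ))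
      = ∑ t, Matrix.trace ((Λ t)ᵀ * Λ t) := by
    rw [← Finset.sum_add_distrib, ← Finset.sum_add_distrib]
    exact Finset.sum_congr rfl fun t _ => hstar t
  have e2 : (∑ t, Matrix.trace ((Λ t)ᵀ * Λ t))
      + (∑ t, (n:ℝ)⁻¹ * IdentAux.sq ((Θ' - (n:ℝ)⁻¹ • (Θ * Θᵀ * Θ')) * (Λ' t * ((n:ℝ)⁻¹ • (Φ'ᵀ * Φ)))))
      + (∑ t, (n:ℝ)⁻¹ * IdentAux.sq ((Φ' - (n:ℝ)⁻¹ • (Φ * Φᵀ * Φ')) * (Λ' t)ᵀ))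
      = ∑ t, Matrix.trace ((Λ' t)ᵀ * Λ' t) := by
    rw [← Finset.sum_add_distrib, ← Finset.sum_add_distrib]
    exact Finset.sum_congr rfl fun t _ => hstar' t
  -- all the nonnegative defect terms vanish
  have hnn : ∀ {m k : ℕ} (X : Fin T → Matrix (Fin m) (Fin k) ℝ),
      0 ≤ ∑ t, (n:ℝ)⁻¹ * IdentAux.sq (X t) :=
    fun X => Finset.sum_nonneg fun t _ =>
      mul_nonneg (le_of_lt hnpos) (IdentAux.sq_nonneg (X t))
  have hSa : ∑ t, (n:ℝ)⁻¹ * IdentAux.sq (H * (Λ t * Q)) = 0 := by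
    have n1 := hnn (fun t => H * (Λ t * Q))
    have n2 := hnn (fun t => G * (Λ t)ᵀ)
    have n3 := hnn (fun t => (Θ' - (n:ℝ)⁻¹ • (Θ * Θᵀ * Θ')) * (Λ' t * ((n:ℝ)⁻¹ • (Φ'ᵀ * Φ))))
    have n4 := hnn (fun t => (Φ' - (n:ℝ)⁻¹ • (Φ * Φᵀ * Φ')) * (Λ' t)ᵀ)
    linarith [e1, e2]
  have hSb : ∑ t, (n:ℝ)⁻¹ * IdentAux.sq (G * (Λ t)ᵀ) = 0 := by
    have n1 := hnn (fun t => H * (Λ t * Q))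
    have n2 := hnn (fun t => G * (Λ t)ᵀ)
    have n3 := hnn (fun t => (Θ' - (n:ℝ)⁻¹ • (Θ * Θᵀ * Θ')) * (Λ' t * ((n:ℝ)⁻¹ • (Φ'ᵀ * Φ))))
    have n4 := hnn (fun t => (Φ' - (n:ℝ)⁻¹ • (Φ * Φᵀ * Φ')) * (Λ' t)ᵀ)
    linarith [e1, e2]
  have hHz : ∀ t, H * (Λ t * Q) = 0 := by
    intro t
    have hterm := (Finset.sum_eq_zero_iff_of_nonneg (fun t _ =>
      mul_nonneg (le_of_lt hnpos) (IdentAux.sq_nonneg (H * (Λ t * Q))))).mp hSa t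
      (Finset.mem_univ t)
    have : IdentAux.sq (H * (Λ t * Q)) = 0 :=
      (mul_eq_zero.mp hterm).resolve_left (ne_of_gt hnpos)
    exact IdentAux.sq_eq_zero this
  have hGz : ∀ t, G * (Λ t)ᵀ = 0 := by
    intro t
    have hterm := (Finset.sum_eq_zero_iff_of_nonneg (fun t _ =>
      mul_nonneg (le_of_lt hnpos) (IdentAux.sq_nonneg (G * (Λ t)ᵀ)))).mp hSb t
      (Finset.mem_univ t)
    have : IdentAux.sq (G * (Λ t)ᵀ) = 0 :=
      (mul_eq_zero.mp hterm).resolve_left (ne_of_gt hnpos)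
    exact IdentAux.sq_eq_zero this
  have hQQ : Q * Qᵀ = 1 := by
    have h0 : ∀ t, (1 - Q * Qᵀ) * ((Λ t)ᵀ * Λ t) = 0 := by
      intro t
      rw [← hGc, Matrix.smul_mul,
        show Gᵀ * G * ((Λ t)ᵀ * Λ t) = Gᵀ * ((G * (Λ t)ᵀ) * Λ t) by
          simp only [Matrix.mul_assoc], hGz t, Matrix.zero_mul, Matrix.mul_zero, smul_zero]
    have hsum0 : (1 - Q * Qᵀ) * ((T:ℝ) • Matrix.diagonal d2) = 0 := by
      rw [← hsum2, Matrix.mul_sum]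
      exact Finset.sum_eq_zero fun t _ => h0 t
    have hz : (1 : Matrix (Fin k2) (Fin k2) ℝ) - Q * Qᵀ = 0 := by
      ext a b
      have hab := congrFun (congrFun hsum0 a) b
      rw [Matrix.mul_smul, Matrix.smul_apply, Matrix.mul_diagonal] at hab
      have := mul_eq_zero.mp hab
      rcases this with hc | hc
      · exact absurd hc hT
      · have := mul_eq_zero.mp hc
        rcases this with hc' | hc'
        · simpa using hc'
        · exact absurd hc' (ne_of_gt (hd2p b))
    have := sub_eq_zero.mp hz
    exact this.symm
  have hPP : P * Pᵀ = 1 := by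
    have h0 : ∀ t, (1 - P * Pᵀ) * (Λ t * (Q * Qᵀ)) = 0 := by
      intro t
      rw [← hHc, Matrix.smul_mul,
        show Hᵀ * H * (Λ t * (Q * Qᵀ)) = Hᵀ * ((H * (Λ t * Q)) * Qᵀ) by
          simp only [Matrix.mul_assoc], hHz t, Matrix.zero_mul, Matrix.mul_zero, smul_zero]
    have h1 : ∀ t, (1 - P * Pᵀ) * (Λ t * (Λ t)ᵀ) = 0 := by
      intro t
      have := h0 t
      rw [hQQ, Matrix.mul_one] at this
      rw [show (1 - P * Pᵀ) * (Λ t * (Λ t)ᵀ) = ((1 - P * Pᵀ) * Λ t) * (Λ t)ᵀ by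
        simp only [Matrix.mul_assoc], this, Matrix.zero_mul]
    have hsum0 : (1 - P * Pᵀ) * ((T:ℝ) • Matrix.diagonal d1) = 0 := by
      rw [← hsum1, Matrix.mul_sum]
      exact Finset.sum_eq_zero fun t _ => h1 t
    have hz : (1 : Matrix (Fin k1) (Fin k1) ℝ) - P * Pᵀ = 0 := by
      ext a b
      have hab := congrFun (congrFun hsum0 a) b
      rw [Matrix.mul_smul, Matrix.smul_apply, Matrix.mul_diagonal] at hab
      have := mul_eq_zero.mp hab
      rcases this with hc | hc
      · exact absurd hc hT
      · have := mul_eq_zero.mp hc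
        rcases this with hc' | hc'
        · simpa using hc'
        · exact absurd hc' (ne_of_gt (hd1p b))
    have := sub_eq_zero.mp hz
    exact this.symm
  have hPo : Pᵀ * P = 1 := mul_eq_one_comm.mp hPP
  have hQo : Qᵀ * Q = 1 := mul_eq_one_comm.mp hQQ
  -- recover the factors
  have hΘ'P : Θ' = Θ * P := hfacP hPo
  have hΦ'Q : Φ' = Φ * Q := hfacQ hQo
  -- diagonal intertwining relations
  have hper1 : ∀ t, Λ' t * (Λ' t)ᵀ = Pᵀ * (Λ t * (Λ t)ᵀ) * P := by
    intro t
    have hk3 : Λ' t = Pᵀ * Λ t * Q := key3 t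
    rw [hk3]
    simp only [Matrix.transpose_mul, Matrix.transpose_transpose, Matrix.mul_assoc]
    rw [show Q * (Qᵀ * ((Λ t)ᵀ * P)) = (Q * Qᵀ) * ((Λ t)ᵀ * P) by
      simp only [Matrix.mul_assoc], hQQ, Matrix.one_mul]
  have hper2 : ∀ t, (Λ' t)ᵀ * Λ' t = Qᵀ * ((Λ t)ᵀ * Λ t) * Q := by
    intro t
    have hk3 : Λ' t = Pᵀ * Λ t * Q := key3 t
    rw [hk3]
    simp only [Matrix.transpose_mul, Matrix.transpose_transpose, Matrix.mul_assoc]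
    rw [show P * (Pᵀ * (Λ t * Q)) = (P * Pᵀ) * (Λ t * Q) by
      simp only [Matrix.mul_assoc], hPP, Matrix.one_mul]
  have hD1 : Matrix.diagonal d1' = Pᵀ * Matrix.diagonal d1 * P := by
    have hs : (T:ℝ) • Matrix.diagonal d1' = (T:ℝ) • (Pᵀ * Matrix.diagonal d1 * P) := by
      rw [← hsum1']
      calc ∑ t, Λ' t * (Λ' t)ᵀ = ∑ t, Pᵀ * (Λ t * (Λ t)ᵀ) * P :=
            Finset.sum_congr rfl fun t _ => hper1 t
        _ = Pᵀ * (∑ t, Λ t * (Λ t)ᵀ) * P := by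
            rw [Matrix.mul_sum, Matrix.sum_mul]
        _ = (T:ℝ) • (Pᵀ * Matrix.diagonal d1 * P) := by
            rw [hsum1, Matrix.mul_smul, Matrix.smul_mul]
    have := congrArg (fun X => (T:ℝ)⁻¹ • X) hs
    simpa [smul_smul, inv_mul_cancel₀ hT] using this
  have hD2 : Matrix.diagonal d2' = Qᵀ * Matrix.diagonal d2 * Q := by
    have hs : (T:ℝ) • Matrix.diagonal d2' = (T:ℝ) • (Qᵀ * Matrix.diagonal d2 * Q) := by
      rw [← hsum2']
      calc ∑ t, (Λ' t)ᵀ * Λ' t = ∑ t, Qᵀ * ((Λ t)ᵀ * Λ t) * Q :=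
            Finset.sum_congr rfl fun t _ => hper2 t
        _ = Qᵀ * (∑ t, (Λ t)ᵀ * Λ t) * Q := by
            rw [Matrix.mul_sum, Matrix.sum_mul]
        _ = (T:ℝ) • (Qᵀ * Matrix.diagonal d2 * Q) := by
            rw [hsum2, Matrix.mul_smul, Matrix.smul_mul]
    have := congrArg (fun X => (T:ℝ)⁻¹ • X) hs
    simpa [smul_smul, inv_mul_cancel₀ hT] using this
  obtain ⟨r1, hr1s, hr1⟩ := IdentAux.diag_sign P d1 d1' hPo hd1a hd1a' hD1
  obtain ⟨r2, hr2s, hr2⟩ := IdentAux.diag_sign Q d2 d2' hQo hd2a hd2a' hD2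
  refine ⟨r1, r2, hr1s, hr2s, by rw [hΘ'P, hr1], by rw [hΦ'Q, hr2], fun t => ?_⟩
  have hk3 : Λ' t = Pᵀ * Λ t * Q := key3 t
  rw [hk3, hr1, hr2, Matrix.diagonal_transpose]
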